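/- For n ≥ 1 and x ∈ (−1,1), the principal value integral p.v. ∫_{−1}^{1} T_n(y) / (√(1 − y²)·(x − y)) dy equals −π·U_{n−1}(x). -/

import Mathlib

open Polynomial Polynomial.Chebyshev Real Filter Topology MeasureTheory

open Set

lemma integrableOn_invSqrt : IntegrableOn (fun y : ℝ => 1 / Real.sqrt (1 - y ^ 2))
    (Set.Ioo (-1 : ℝ) 1) := by
  have h := intervalIntegral.integrableOn_deriv_of_nonneg (g := Real.arcsin)
    (g' := fun y : ℝ => 1 / Real.sqrt (1 - y ^ 2)) (a := -1) (b := 1)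
    (Real.continuous_arcsin.continuousOn)
    (fun y hy => Real.hasDerivAt_arcsin (ne_of_gt hy.1) (ne_of_lt hy.2))
    (fun y hy => by positivity)
  exact h.mono_set Set.Ioo_subset_Ioc_self

lemma integrableOn_cont_div_sqrt {f : ℝ → ℝ} (hf : Continuous f) :
    IntegrableOn (fun y : ℝ => f y / Real.sqrt (1 - y ^ 2)) (Set.Ioo (-1 : ℝ) 1) := by
  obtain ⟨C, hC⟩ := (isCompact_Icc (a := (-1:ℝ)) (b := 1)).exists_bound_of_continuousOn
    hf.continuousOn
  have hC0 : 0 ≤ C := le_trans (norm_nonneg _) (hC 0 (by norm_num))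
  refine Integrable.mono (integrableOn_invSqrt.const_mul C) ?_ ?_
  · exact ((hf.measurable.div (Real.continuous_sqrt.measurable.comp
      ((measurable_const.sub (measurable_id.pow_const 2)))))).aestronglyMeasurable
  · rw [ae_restrict_iff' measurableSet_Ioo]
    filter_upwards with y hy
    have hs : 0 < Real.sqrt (1 - y ^ 2) := Real.sqrt_pos.2 (by nlinarith [hy.1, hy.2])
    have h1 : ‖f y / Real.sqrt (1 - y ^ 2)‖ = ‖f y‖ / Real.sqrt (1 - y ^ 2) := by
      rw [norm_div, Real.norm_of_nonneg hs.le]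
    rw [h1, Real.norm_of_nonneg (by positivity : (0:ℝ) ≤ C * (1 / Real.sqrt (1 - y ^ 2)))]
    rw [mul_one_div]
    gcongr
    exact hC y (Set.mem_Icc_of_Ioo hy)

lemma intervalIntegrable_cont_div_sqrt {f : ℝ → ℝ} (hf : Continuous f) :
    IntervalIntegrable (fun y : ℝ => f y / Real.sqrt (1 - y ^ 2)) volume (-1 : ℝ) 1 := by
  rw [intervalIntegrable_iff_integrableOn_Ioo_of_le (by norm_num)]
  exact integrableOn_cont_div_sqrt hf

lemma setIntegral_Ioo_eq_intervalIntegral {f : ℝ → ℝ} :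
    ∫ y in Set.Ioo (-1 : ℝ) 1, f y = ∫ y in (-1 : ℝ)..1, f y := by
  rw [intervalIntegral.integral_of_le (by norm_num : (-1:ℝ) ≤ 1),
    MeasureTheory.integral_Ioc_eq_integral_Ioo]

lemma invSqrt_integral : ∫ y in Set.Ioo (-1 : ℝ) 1, 1 / Real.sqrt (1 - y ^ 2) = π := by
  rw [setIntegral_Ioo_eq_intervalIntegral]
  have := intervalIntegral.integral_eq_sub_of_hasDeriv_right_of_le (f := Real.arcsin)
    (f' := fun y : ℝ => 1 / Real.sqrt (1 - y ^ 2)) (by norm_num : (-1:ℝ) ≤ 1)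
    Real.continuous_arcsin.continuousOn
    (fun y hy => (Real.hasDerivAt_arcsin (ne_of_gt hy.1) (ne_of_lt hy.2)).hasDerivWithinAt)
    (intervalIntegrable_cont_div_sqrt continuous_const)
  rw [this, Real.arcsin_one, Real.arcsin_neg_one]
  ring

lemma cheb_weight_integral (n : ℕ) (hn : 1 ≤ n) :
    ∫ y in Set.Ioo (-1 : ℝ) 1, (T ℝ (n : ℤ)).eval y / Real.sqrt (1 - y ^ 2) = 0 := by
  rw [setIntegral_Ioo_eq_intervalIntegral]
  have hderiv : ∀ y ∈ Set.Ioo (-1 : ℝ) 1,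
      HasDerivAt (fun y => -(1 / (n : ℝ)) * Real.sin ((n : ℝ) * Real.arccos y))
        ((T ℝ (n : ℤ)).eval y / Real.sqrt (1 - y ^ 2)) y := by
    intro y hy
    have h1 := (Real.hasDerivAt_arccos (ne_of_gt hy.1) (ne_of_lt hy.2)).const_mul (n : ℝ)
    have h2 := (Real.hasDerivAt_sin ((n : ℝ) * Real.arccos y)).comp y h1
    have h3 := h2.const_mul (-(1 / (n : ℝ)))
    convert h3 using 1
    case e'_4 => rfl
    case e'_5 => rfl
    case e'_8 => rfl
    have hT : (T ℝ (n : ℤ)).eval y = Real.cos ((n : ℝ) * Real.arccos y) := by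
      have := T_real_cos (Real.arccos y) (n : ℤ)
      rwa [Real.cos_arccos hy.1.le hy.2.le, Int.cast_natCast] at this
    have hn0 : (n : ℝ) ≠ 0 := Nat.cast_ne_zero.2 (by omega)
    rw [hT]
    field_simp
  have := intervalIntegral.integral_eq_sub_of_hasDeriv_right_of_le
    (f := fun y => -(1 / (n : ℝ)) * Real.sin ((n : ℝ) * Real.arccos y))
    (f' := fun y => (T ℝ (n : ℤ)).eval y / Real.sqrt (1 - y ^ 2))
    (by norm_num : (-1:ℝ) ≤ 1)
    ((continuous_const.mul (Real.continuous_sin.comp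
      (continuous_const.mul Real.continuous_arccos))).continuousOn)
    (fun y hy => (hderiv y hy).hasDerivWithinAt)
    (intervalIntegrable_cont_div_sqrt (Polynomial.continuous _))
  rw [this]
  simp [Real.arccos_one, Real.arccos_neg_one, Real.sin_nat_mul_pi]

lemma measurableSet_A (x ε : ℝ) :
    MeasurableSet ({y : ℝ | ε < |y - x|} ∩ Set.Ioo (-1 : ℝ) 1) := by
  refine MeasurableSet.inter ?_ measurableSet_Ioo
  exact (isOpen_lt continuous_const ((continuous_id.sub continuous_const).abs)).measurableSet

lemma A_split {x ε : ℝ} (hε : 0 < ε) (h1 : ε < 1 - x) (h2 : ε < x + 1) :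
    {y : ℝ | ε < |y - x|} ∩ Set.Ioo (-1 : ℝ) 1
      = Set.Ioo (-1 : ℝ) (x - ε) ∪ Set.Ioo (x + ε) 1 := by
  ext y
  simp only [Set.mem_inter_iff, Set.mem_setOf_eq, Set.mem_Ioo, Set.mem_union, lt_abs]
  constructor
  · rintro ⟨h | h, hy1, hy2⟩
    · right; constructor <;> linarith
    · left; constructor <;> linarith
  · rintro (⟨h1', h2'⟩ | ⟨h1', h2'⟩)
    · exact ⟨Or.inr (by linarith), h1', by linarith⟩
    · exact ⟨Or.inl (by linarith), by linarith, h2'⟩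

lemma sqrt_pos_of_Ioo {y : ℝ} (hy : y ∈ Set.Ioo (-1 : ℝ) 1) :
    0 < Real.sqrt (1 - y ^ 2) :=
  Real.sqrt_pos.2 (by nlinarith [hy.1, hy.2])

lemma integrableOn_A_sing {x : ℝ} {ε : ℝ} (hε : 0 < ε) {f : ℝ → ℝ} (hf : Continuous f) :
    IntegrableOn (fun y => f y / (Real.sqrt (1 - y ^ 2) * (x - y)))
      ({y : ℝ | ε < |y - x|} ∩ Set.Ioo (-1 : ℝ) 1) := by
  obtain ⟨C, hC⟩ := (isCompact_Icc (a := (-1:ℝ)) (b := 1)).exists_bound_of_continuousOn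
    hf.continuousOn
  have hC0 : 0 ≤ C := le_trans (norm_nonneg _) (hC 0 (by norm_num))
  have hint : IntegrableOn (fun y : ℝ => (C / ε) * (1 / Real.sqrt (1 - y ^ 2)))
      ({y : ℝ | ε < |y - x|} ∩ Set.Ioo (-1 : ℝ) 1) :=
    IntegrableOn.mono_set (integrableOn_invSqrt.const_mul _) Set.inter_subset_right
  refine Integrable.mono hint ?_ ?_
  · refine Measurable.aestronglyMeasurable ?_
    exact hf.measurable.div ((Real.continuous_sqrt.measurable.comp
      (measurable_const.sub (measurable_id.pow_const 2))).mul
      (measurable_const.sub measurable_id))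
  · rw [ae_restrict_iff' (measurableSet_A x ε)]
    filter_upwards with y hy
    obtain ⟨hy1, hy2⟩ := hy
    have hs : 0 < Real.sqrt (1 - y ^ 2) := sqrt_pos_of_Ioo hy2
    have habs : ε ≤ |x - y| := by rw [abs_sub_comm]; exact (le_of_lt hy1)
    have h1 : ‖f y / (Real.sqrt (1 - y ^ 2) * (x - y))‖
        = ‖f y‖ / (Real.sqrt (1 - y ^ 2) * |x - y|) := by
      simp [norm_div, norm_mul, Real.norm_of_nonneg hs.le, Real.norm_eq_abs]
    have hxy : 0 < |x - y| := lt_of_lt_of_le hε habs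
    rw [h1, Real.norm_of_nonneg (by positivity : (0:ℝ) ≤ (C / ε) * (1 / Real.sqrt (1 - y ^ 2)))]
    rw [mul_one_div, div_div]
    rw [div_le_div_iff₀ (by positivity) (by positivity)]
    have hb := hC y (Set.mem_Icc_of_Ioo hy2)
    calc ‖f y‖ * (ε * Real.sqrt (1 - y ^ 2)) ≤ C * (|x - y| * Real.sqrt (1 - y ^ 2)) := by
          apply mul_le_mul hb ?_ (by positivity) hC0
          exact mul_le_mul_of_nonneg_right habs hs.le
      _ = C * (Real.sqrt (1 - y ^ 2) * |x - y|) := by ring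

lemma tendsto_A_integral_cont {x : ℝ} (hx1 : -1 < x) (hx2 : x < 1) {f : ℝ → ℝ}
    (hf : Continuous f) :
    Tendsto (fun ε : ℝ => ∫ y in {y : ℝ | ε < |y - x|} ∩ Set.Ioo (-1 : ℝ) 1,
        f y / Real.sqrt (1 - y ^ 2)) (𝓝[>] 0)
      (𝓝 (∫ y in Set.Ioo (-1 : ℝ) 1, f y / Real.sqrt (1 - y ^ 2))) := by
  set g : ℝ → ℝ := fun y => f y / Real.sqrt (1 - y ^ 2) with hg
  set ε₀ : ℝ := min ((1 - x) / 2) ((x + 1) / 2) with hε₀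
  have hε₀pos : 0 < ε₀ := by
    apply lt_min <;> linarith
  have hsub : Set.Icc (x - ε₀) (x + ε₀) ⊆ Set.Ioo (-1 : ℝ) 1 := by
    intro y hy
    have h1 := hy.1; have h2 := hy.2
    have := min_le_left ((1 - x) / 2) ((x + 1) / 2)
    have := min_le_right ((1 - x) / 2) ((x + 1) / 2)
    constructor <;> [linarith; linarith]
  -- bound M on the compact neighborhood
  have hgcont : ContinuousOn g (Set.Icc (x - ε₀) (x + ε₀)) := by
    apply ContinuousOn.div hf.continuousOn
    · exact (Real.continuous_sqrt.comp (continuous_const.sub (continuous_pow 2))).continuousOn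
    · intro y hy; exact (sqrt_pos_of_Ioo (hsub hy)).ne'
  obtain ⟨M, hM⟩ := (isCompact_Icc (a := x - ε₀) (b := x + ε₀)).exists_bound_of_continuousOn
    hgcont
  have hM0 : 0 ≤ M := le_trans (norm_nonneg _)
    (hM x (by constructor <;> linarith))
  have hint : IntegrableOn g (Set.Ioo (-1 : ℝ) 1) := integrableOn_cont_div_sqrt hf
  have key : Tendsto (fun ε : ℝ => (∫ y in {y : ℝ | ε < |y - x|} ∩ Set.Ioo (-1 : ℝ) 1, g y)
      - ∫ y in Set.Ioo (-1 : ℝ) 1, g y) (𝓝[>] 0) (𝓝 0) := by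
    apply squeeze_zero_norm' (a := fun ε : ℝ => M * (2 * ε))
    · filter_upwards [Ioo_mem_nhdsGT_of_mem (Set.left_mem_Ico.2 hε₀pos)] with ε hε
      obtain ⟨hεpos, hεlt⟩ := hε
      set A : Set ℝ := {y : ℝ | ε < |y - x|} ∩ Set.Ioo (-1 : ℝ) 1 with hA
      have hAsub : A ⊆ Set.Ioo (-1 : ℝ) 1 := Set.inter_subset_right
      have hdiff_sub : Set.Ioo (-1 : ℝ) 1 \ A ⊆ Set.Icc (x - ε) (x + ε) := by
        intro y hy
        have h1 : ¬ (ε < |y - x|) := fun h => hy.2 ⟨h, hy.1⟩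
        have h2 := abs_le.1 (not_lt.1 h1)
        constructor <;> linarith [h2.1, h2.2]
      have hsplit : (∫ y in Set.Ioo (-1 : ℝ) 1, g y)
          = (∫ y in A, g y) + ∫ y in Set.Ioo (-1 : ℝ) 1 \ A, g y := by
        rw [← MeasureTheory.setIntegral_union disjoint_sdiff_self_right
          ((measurableSet_Ioo.diff (measurableSet_A x ε)))
          (hint.mono_set hAsub) (hint.mono_set Set.diff_subset),
          Set.union_diff_cancel hAsub]
      have hbound : ‖(∫ y in A, g y) - ∫ y in Set.Ioo (-1 : ℝ) 1, g y‖ ≤ M * (2 * ε) := by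
        rw [hsplit]
        rw [show (∫ y in A, g y) - ((∫ y in A, g y) + ∫ y in Set.Ioo (-1 : ℝ) 1 \ A, g y)
          = -(∫ y in Set.Ioo (-1 : ℝ) 1 \ A, g y) by ring, norm_neg]
        have hvol : volume (Set.Ioo (-1 : ℝ) 1 \ A) ≤ ENNReal.ofReal (2 * ε) := by
          calc volume (Set.Ioo (-1 : ℝ) 1 \ A) ≤ volume (Set.Icc (x - ε) (x + ε)) :=
                measure_mono hdiff_sub
            _ = ENNReal.ofReal (2 * ε) := by rw [Real.volume_Icc]; ring_nf
        have hfin : volume (Set.Ioo (-1 : ℝ) 1 \ A) < ⊤ :=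
          lt_of_le_of_lt hvol ENNReal.ofReal_lt_top
        calc ‖∫ y in Set.Ioo (-1 : ℝ) 1 \ A, g y‖
            ≤ M * (volume (Set.Ioo (-1 : ℝ) 1 \ A)).toReal := by
              apply MeasureTheory.norm_setIntegral_le_of_norm_le_const hfin ?_
              intro y hy
              apply hM
              have h1 := hdiff_sub hy
              have h2 : ε ≤ ε₀ := hεlt.le
              constructor <;> [linarith [h1.1]; linarith [h1.2]]
          _ ≤ M * (2 * ε) := by
              apply mul_le_mul_of_nonneg_left ?_ hM0
              rw [← ENNReal.toReal_ofReal (by positivity : (0:ℝ) ≤ 2 * ε)]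
              exact ENNReal.toReal_mono ENNReal.ofReal_ne_top hvol
      exact hbound
    · have : Tendsto (fun ε : ℝ => M * (2 * ε)) (𝓝 0) (𝓝 (M * (2 * 0))) :=
        (tendsto_id.const_mul 2).const_mul M
      simpa using this.mono_left nhdsWithin_le_nhds
  have := key.add_const (∫ y in Set.Ioo (-1 : ℝ) 1, g y)
  simpa using this

lemma tendsto_A_sing_zero {x : ℝ} (hx1 : -1 < x) (hx2 : x < 1) :
    Tendsto (fun ε : ℝ => ∫ y in {y : ℝ | ε < |y - x|} ∩ Set.Ioo (-1 : ℝ) 1,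
        1 / (Real.sqrt (1 - y ^ 2) * (x - y))) (𝓝[>] 0) (𝓝 0) := by
  set s : ℝ := Real.sqrt (1 - x ^ 2) with hs
  have hspos : 0 < s := sqrt_pos_of_Ioo ⟨hx1, hx2⟩
  have hs2 : s ^ 2 = 1 - x ^ 2 := Real.sq_sqrt (by nlinarith)
  set N : ℝ → ℝ := fun y => 1 - x * y + s * Real.sqrt (1 - y ^ 2) with hN
  have hNcont : Continuous N := by
    apply (continuous_const.sub (continuous_const.mul continuous_id)).add
    exact continuous_const.mul (Real.continuous_sqrt.comp (continuous_const.sub (continuous_pow 2)))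
  have hNpos : ∀ y ∈ Set.Icc (-1 : ℝ) 1, 0 < N y := by
    intro y hy
    have hy2 : y ^ 2 ≤ 1 := by nlinarith [hy.1, hy.2]
    have h1 : x * y < 1 := by nlinarith [sq_nonneg (x - y), sq_nonneg (x + y)]
    have : 0 ≤ s * Real.sqrt (1 - y ^ 2) := by positivity
    simp only [hN]; nlinarith
  have hNderiv : ∀ y ∈ Set.Ioo (-1 : ℝ) 1,
      HasDerivAt N (-x + s * (-(2 * y) / (2 * Real.sqrt (1 - y ^ 2)))) y := by
    intro y hy
    have h1 : HasDerivAt (fun y : ℝ => 1 - y ^ 2) (-(2 * y)) y := by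
      simpa using ((hasDerivAt_pow 2 y).const_sub 1)
    have h2 := (h1.sqrt (by nlinarith [hy.1, hy.2] : 1 - y ^ 2 ≠ 0))
    have h3 : HasDerivAt (fun y : ℝ => 1 - x * y) (-x) y := by
      simpa using ((hasDerivAt_id y).const_mul x).const_sub 1
    exact h3.add (h2.const_mul s)
  have key : ∀ y ∈ Set.Ioo (-1 : ℝ) 1, x - y ≠ 0 →
      s⁻¹ * ((-x + s * (-(2 * y) / (2 * Real.sqrt (1 - y ^ 2)))) / N y + 1 / (x - y))
      = 1 / (Real.sqrt (1 - y ^ 2) * (x - y)) := by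
    intro y hy hxy
    have hw : 0 < Real.sqrt (1 - y ^ 2) := sqrt_pos_of_Ioo hy
    have hw2 : Real.sqrt (1 - y ^ 2) ^ 2 = 1 - y ^ 2 := Real.sq_sqrt (by nlinarith [hy.1, hy.2])
    have hNy : N y ≠ 0 := (hNpos y (Set.mem_Icc_of_Ioo hy)).ne'
    set w : ℝ := Real.sqrt (1 - y ^ 2)
    have hNval : N y = 1 - x * y + s * w := rfl
    rw [hNval]
    have hNy' : 1 - x * y + s * w ≠ 0 := hNy
    field_simp
    ring_nf
    linear_combination s * hw2 - w * hs2
  -- FTC on the left piece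
  set Gm : ℝ → ℝ := fun y => s⁻¹ * (Real.log (N y) - Real.log (x - y)) with hGm
  set Gp : ℝ → ℝ := fun y => s⁻¹ * (Real.log (N y) - Real.log (y - x)) with hGp
  set ε₀ : ℝ := min ((1 - x) / 2) ((x + 1) / 2) with hε₀
  have hε₀pos : 0 < ε₀ := by apply lt_min <;> linarith
  have hleft : ∀ ε : ℝ, 0 < ε → ε < ε₀ →
      ∫ y in Set.Ioo (-1 : ℝ) (x - ε), 1 / (Real.sqrt (1 - y ^ 2) * (x - y))
        = Gm (x - ε) - Gm (-1) := by
    intro ε hεpos hεlt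
    have hb1 : ε < (1 - x) / 2 := lt_of_lt_of_le hεlt (min_le_left _ _)
    have hb2 : ε < (x + 1) / 2 := lt_of_lt_of_le hεlt (min_le_right _ _)
    have hab : (-1 : ℝ) ≤ x - ε := by linarith
    have hcont : ContinuousOn Gm (Set.Icc (-1 : ℝ) (x - ε)) := by
      apply ContinuousOn.mul continuousOn_const
      apply ContinuousOn.sub
      · exact ContinuousOn.log hNcont.continuousOn
          (fun y hy => (hNpos y ⟨hy.1, by linarith [hy.2]⟩).ne')
      · refine ContinuousOn.log (continuous_const.sub continuous_id).continuousOn ?_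
        intro y hy
        have h2 : y ≤ x - ε := hy.2
        intro hc
        have : x - y = 0 := hc
        linarith
    have hderiv : ∀ y ∈ Set.Ioo (-1 : ℝ) (x - ε),
        HasDerivAt Gm (1 / (Real.sqrt (1 - y ^ 2) * (x - y))) y := by
      intro y hy
      have hyIoo : y ∈ Set.Ioo (-1 : ℝ) 1 := ⟨hy.1, by linarith [hy.2]⟩
      have hxy : x - y ≠ 0 := by have := hy.2; intro hc; have hxy2 : x = y := (by linarith); linarith
      have h1 := (hNderiv y hyIoo).log ((hNpos y (Set.mem_Icc_of_Ioo hyIoo)).ne')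
      have h2 : HasDerivAt (fun y : ℝ => Real.log (x - y)) ((0 - 1) / (x - y)) y :=
        HasDerivAt.log ((hasDerivAt_const y x).sub (hasDerivAt_id y)) hxy
      have h3 := (h1.sub h2).const_mul s⁻¹
      convert h3 using 1
      case e'_4 => rfl
      case e'_5 => rfl
      case e'_8 => rfl
      rw [← key y hyIoo hxy]
      congr 1
      ring
    have hint : IntegrableOn (fun y : ℝ => 1 / (Real.sqrt (1 - y ^ 2) * (x - y)))
        (Set.Ioo (-1 : ℝ) (x - ε)) := by
      refine IntegrableOn.mono_set (integrableOn_A_sing hεpos continuous_const) ?_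
      intro y hy
      refine ⟨?_, ⟨hy.1, by linarith [hy.2]⟩⟩
      simp only [Set.mem_setOf_eq]
      rw [abs_sub_comm, abs_of_pos (by linarith [hy.2] : 0 < x - y)]
      linarith [hy.2]
    rw [show (Set.Ioo (-1 : ℝ) (x - ε)) = Set.Ioo (-1 : ℝ) (x - ε) from rfl,
      ← MeasureTheory.integral_Ioc_eq_integral_Ioo,
      ← intervalIntegral.integral_of_le hab]
    exact intervalIntegral.integral_eq_sub_of_hasDeriv_right_of_le hab hcont
      (fun y hy => (hderiv y hy).hasDerivWithinAt)
      ((intervalIntegrable_iff_integrableOn_Ioo_of_le hab).2 hint)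
  have hright : ∀ ε : ℝ, 0 < ε → ε < ε₀ →
      ∫ y in Set.Ioo (x + ε) 1, 1 / (Real.sqrt (1 - y ^ 2) * (x - y))
        = Gp 1 - Gp (x + ε) := by
    intro ε hεpos hεlt
    have hb1 : ε < (1 - x) / 2 := lt_of_lt_of_le hεlt (min_le_left _ _)
    have hb2 : ε < (x + 1) / 2 := lt_of_lt_of_le hεlt (min_le_right _ _)
    have hab : (x + ε : ℝ) ≤ 1 := by linarith
    have hcont : ContinuousOn Gp (Set.Icc (x + ε) 1) := by
      apply ContinuousOn.mul continuousOn_const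
      apply ContinuousOn.sub
      · exact ContinuousOn.log hNcont.continuousOn
          (fun y hy => (hNpos y ⟨by linarith [hy.1], hy.2⟩).ne')
      · refine ContinuousOn.log (continuous_id.sub continuous_const).continuousOn ?_
        intro y hy
        have h2 : x + ε ≤ y := hy.1
        intro hc
        have : y - x = 0 := hc
        linarith
    have hderiv : ∀ y ∈ Set.Ioo (x + ε) 1,
        HasDerivAt Gp (1 / (Real.sqrt (1 - y ^ 2) * (x - y))) y := by
      intro y hy
      have hyIoo : y ∈ Set.Ioo (-1 : ℝ) 1 := ⟨by linarith [hy.1], hy.2⟩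
      have hxy : x - y ≠ 0 := by have := hy.1; intro hc; have hxy2 : x = y := (by linarith); linarith
      have hyx : y - x ≠ 0 := by intro hc; apply hxy; linarith
      have h1 := (hNderiv y hyIoo).log ((hNpos y (Set.mem_Icc_of_Ioo hyIoo)).ne')
      have h2 : HasDerivAt (fun y : ℝ => Real.log (y - x)) ((1 - 0) / (y - x)) y :=
        HasDerivAt.log ((hasDerivAt_id y).sub (hasDerivAt_const y x)) hyx
      have h3 := (h1.sub h2).const_mul s⁻¹
      convert h3 using 1
      case e'_4 => rfl
      case e'_5 => rfl
      case e'_8 => rfl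
      rw [← key y hyIoo hxy]
      congr 1
      rw [show y - x = -(x - y) by ring]
      rw [div_neg]
      ring
    have hint : IntegrableOn (fun y : ℝ => 1 / (Real.sqrt (1 - y ^ 2) * (x - y)))
        (Set.Ioo (x + ε) 1) := by
      refine IntegrableOn.mono_set (integrableOn_A_sing hεpos continuous_const) ?_
      intro y hy
      refine ⟨?_, ⟨by linarith [hy.1], hy.2⟩⟩
      simp only [Set.mem_setOf_eq]
      rw [abs_of_pos (by linarith [hy.1] : 0 < y - x)]
      linarith [hy.1]
    rw [← MeasureTheory.integral_Ioc_eq_integral_Ioo,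
      ← intervalIntegral.integral_of_le hab]
    exact intervalIntegral.integral_eq_sub_of_hasDeriv_right_of_le hab hcont
      (fun y hy => (hderiv y hy).hasDerivWithinAt)
      ((intervalIntegrable_iff_integrableOn_Ioo_of_le hab).2 hint)
  -- boundary values vanish
  have hGm_neg_one : Gm (-1) = 0 := by
    have h1 : Real.sqrt (1 - (-1 : ℝ) ^ 2) = 0 := by norm_num
    simp only [hGm, hN, h1, mul_zero, add_zero]
    rw [show x - (-1 : ℝ) = 1 - x * (-1) by ring]
    simp
  have hGp_one : Gp 1 = 0 := by
    have h1 : Real.sqrt (1 - (1 : ℝ) ^ 2) = 0 := by norm_num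
    simp only [hGp, hN, h1, mul_zero, add_zero]
    rw [show (1 : ℝ) - x = 1 - x * 1 by ring]
    simp
  -- combine
  have hcongr : ∀ ε ∈ Set.Ioo (0 : ℝ) ε₀,
      (∫ y in {y : ℝ | ε < |y - x|} ∩ Set.Ioo (-1 : ℝ) 1,
        1 / (Real.sqrt (1 - y ^ 2) * (x - y)))
      = s⁻¹ * (Real.log (N (x - ε)) - Real.log (N (x + ε))) := by
    intro ε hε
    obtain ⟨hεpos, hεlt⟩ := hε
    have hb1 : ε < (1 - x) / 2 := lt_of_lt_of_le hεlt (min_le_left _ _)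
    have hb2 : ε < (x + 1) / 2 := lt_of_lt_of_le hεlt (min_le_right _ _)
    rw [A_split hεpos (by linarith) (by linarith)]
    rw [MeasureTheory.setIntegral_union (by
        apply Set.disjoint_left.2
        intro y hy1 hy2
        have := hy1.2; have := hy2.1
        linarith) measurableSet_Ioo
      (by
        refine IntegrableOn.mono_set (integrableOn_A_sing hεpos continuous_const) ?_
        intro y hy
        refine ⟨?_, ⟨hy.1, by linarith [hy.2]⟩⟩
        simp only [Set.mem_setOf_eq]
        rw [abs_sub_comm, abs_of_pos (by linarith [hy.2] : 0 < x - y)]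
        linarith [hy.2])
      (by
        refine IntegrableOn.mono_set (integrableOn_A_sing hεpos continuous_const) ?_
        intro y hy
        refine ⟨?_, ⟨by linarith [hy.1], hy.2⟩⟩
        simp only [Set.mem_setOf_eq]
        rw [abs_of_pos (by linarith [hy.1] : 0 < y - x)]
        linarith [hy.1])]
    rw [hleft ε hεpos hεlt, hright ε hεpos hεlt, hGm_neg_one, hGp_one]
    have hex : x - (x - ε) = ε := by ring
    have hex2 : x + ε - x = ε := by ring
    simp only [hGm, hGp, hex, hex2]
    ring
  have hNx : N x ≠ 0 := (hNpos x ⟨hx1.le, hx2.le⟩).ne'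
  have htend : Tendsto (fun ε : ℝ => s⁻¹ * (Real.log (N (x - ε)) - Real.log (N (x + ε))))
      (𝓝[>] 0) (𝓝 0) := by
    have h1 : Tendsto (fun ε : ℝ => N (x - ε)) (𝓝 0) (𝓝 (N x)) := by
      have := hNcont.tendsto x
      exact this.comp (by
        have : Tendsto (fun ε : ℝ => x - ε) (𝓝 0) (𝓝 (x - 0)) :=
          tendsto_const_nhds.sub tendsto_id
        simpa using this)
    have h2 : Tendsto (fun ε : ℝ => N (x + ε)) (𝓝 0) (𝓝 (N x)) := by
      have := hNcont.tendsto x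
      exact this.comp (by
        have : Tendsto (fun ε : ℝ => x + ε) (𝓝 0) (𝓝 (x + 0)) :=
          tendsto_const_nhds.add tendsto_id
        simpa using this)
    have h3 : Tendsto (fun ε : ℝ => s⁻¹ * (Real.log (N (x - ε)) - Real.log (N (x + ε))))
        (𝓝 0) (𝓝 (s⁻¹ * (Real.log (N x) - Real.log (N x)))) :=
      (((Real.continuousAt_log hNx).tendsto.comp h1).sub
        ((Real.continuousAt_log hNx).tendsto.comp h2)).const_mul _
    simp only [sub_self, mul_zero] at h3
    exact h3.mono_left nhdsWithin_le_nhds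
  refine htend.congr' ?_
  filter_upwards [Ioo_mem_nhdsGT_of_mem (Set.left_mem_Ico.2 hε₀pos)] with ε hε
  exact (hcongr ε hε).symm

lemma cheb_pv_aux {x : ℝ} (hx1 : -1 < x) (hx2 : x < 1) : ∀ n : ℕ,
    Tendsto
      (fun ε : ℝ =>
        ∫ y in {y : ℝ | ε < |y - x|} ∩ Set.Ioo (-1 : ℝ) 1,
          (T ℝ (n : ℤ)).eval y / (Real.sqrt (1 - y ^ 2) * (x - y)))
      (𝓝[>] 0) (𝓝 (-π * (U ℝ ((n : ℤ) - 1)).eval x)) := by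
  intro n
  induction n using Nat.twoStepInduction with
  | zero =>
    simp only [Nat.cast_zero, zero_sub, U_neg_one, eval_zero, mul_zero]
    have := tendsto_A_sing_zero hx1 hx2
    refine this.congr ?_
    intro ε
    apply MeasureTheory.setIntegral_congr_fun (measurableSet_A x ε)
    intro y hy
    simp [T_zero]
  | one =>
    -- n = 1 : T₁ = X
    have hKey : ∀ ε : ℝ, 0 < ε →
        (∫ y in {y : ℝ | ε < |y - x|} ∩ Set.Ioo (-1 : ℝ) 1,
          (T ℝ ((1 : ℕ) : ℤ)).eval y / (Real.sqrt (1 - y ^ 2) * (x - y)))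
        = x * (∫ y in {y : ℝ | ε < |y - x|} ∩ Set.Ioo (-1 : ℝ) 1,
            1 / (Real.sqrt (1 - y ^ 2) * (x - y)))
          - ∫ y in {y : ℝ | ε < |y - x|} ∩ Set.Ioo (-1 : ℝ) 1,
            1 / Real.sqrt (1 - y ^ 2) := by
      intro ε hε
      rw [← MeasureTheory.integral_const_mul, ← MeasureTheory.integral_sub]
      · apply MeasureTheory.setIntegral_congr_fun (measurableSet_A x ε)
        intro y hy
        obtain ⟨hy1, hy2⟩ := hy
        have hw : 0 < Real.sqrt (1 - y ^ 2) := sqrt_pos_of_Ioo hy2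
        have hxy : x - y ≠ 0 := by
          intro hc
          simp only [Set.mem_setOf_eq] at hy1
          rw [show y - x = -(x - y) by ring, hc] at hy1
          simp at hy1; linarith
        simp only [Nat.cast_one, Int.cast_one, T_one, eval_X]
        field_simp
        ring
      · exact (integrableOn_A_sing hε continuous_const).const_mul x
      · exact IntegrableOn.mono_set (integrableOn_invSqrt) Set.inter_subset_right
    have h1 := (tendsto_A_sing_zero hx1 hx2).const_mul x
    have h2 : Tendsto (fun ε : ℝ => ∫ y in {y : ℝ | ε < |y - x|} ∩ Set.Ioo (-1 : ℝ) 1,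
        1 / Real.sqrt (1 - y ^ 2)) (𝓝[>] 0) (𝓝 π) := by
      have := tendsto_A_integral_cont hx1 hx2 (f := fun _ => (1:ℝ)) continuous_const
      rw [invSqrt_integral] at this
      exact this
    have h3 := h1.sub h2
    simp only [mul_zero, zero_sub] at h3
    have : -π * (U ℝ (((1:ℕ) : ℤ) - 1)).eval x = -π := by
      norm_num [U_zero]
    rw [this]
    refine h3.congr' ?_
    filter_upwards [self_mem_nhdsWithin] with ε hε
    exact (hKey ε hε).symm
  | more n IH IH1 =>
    -- step : T_{n+2} = 2 X T_{n+1} - T_n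
    have hKey : ∀ ε : ℝ, 0 < ε →
        (∫ y in {y : ℝ | ε < |y - x|} ∩ Set.Ioo (-1 : ℝ) 1,
          (T ℝ ((n + 2 : ℕ) : ℤ)).eval y / (Real.sqrt (1 - y ^ 2) * (x - y)))
        = (2 * x) * (∫ y in {y : ℝ | ε < |y - x|} ∩ Set.Ioo (-1 : ℝ) 1,
            (T ℝ ((n + 1 : ℕ) : ℤ)).eval y / (Real.sqrt (1 - y ^ 2) * (x - y)))
          - (∫ y in {y : ℝ | ε < |y - x|} ∩ Set.Ioo (-1 : ℝ) 1,
            (T ℝ (n : ℤ)).eval y / (Real.sqrt (1 - y ^ 2) * (x - y)))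
          - 2 * ∫ y in {y : ℝ | ε < |y - x|} ∩ Set.Ioo (-1 : ℝ) 1,
            (T ℝ ((n + 1 : ℕ) : ℤ)).eval y / Real.sqrt (1 - y ^ 2) := by
      intro ε hε
      rw [← MeasureTheory.integral_const_mul, ← MeasureTheory.integral_const_mul,
        ← MeasureTheory.integral_sub, ← MeasureTheory.integral_sub]
      · apply MeasureTheory.setIntegral_congr_fun (measurableSet_A x ε)
        intro y hy
        obtain ⟨hy1, hy2⟩ := hy
        have hw : 0 < Real.sqrt (1 - y ^ 2) := sqrt_pos_of_Ioo hy2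
        have hxy : x - y ≠ 0 := by
          intro hc
          simp only [Set.mem_setOf_eq] at hy1
          rw [show y - x = -(x - y) by ring, hc] at hy1
          simp at hy1; linarith
        have hT : (T ℝ ((n + 2 : ℕ) : ℤ)).eval y
            = 2 * y * (T ℝ ((n + 1 : ℕ) : ℤ)).eval y - (T ℝ (n : ℤ)).eval y := by
          have := T_add_two ℝ (n : ℤ)
          have hcast : ((n + 2 : ℕ) : ℤ) = (n : ℤ) + 2 := by push_cast; ring
          have hcast1 : ((n + 1 : ℕ) : ℤ) = (n : ℤ) + 1 := by push_cast; ring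
          rw [hcast, hcast1, this]
          simp
        simp only []
        rw [hT]
        field_simp
        ring
      · exact ((integrableOn_A_sing hε (Polynomial.continuous _)).const_mul (2*x)).sub
          (integrableOn_A_sing hε (Polynomial.continuous _))
      · exact IntegrableOn.mono_set
          ((integrableOn_cont_div_sqrt (Polynomial.continuous _)).const_mul 2)
          Set.inter_subset_right
      · exact (integrableOn_A_sing hε (Polynomial.continuous _)).const_mul (2*x)
      · exact integrableOn_A_sing hε (Polynomial.continuous _)
    have h1 := IH1.const_mul (2 * x)
    have h2 := h1.sub IH
    have h3 : Tendsto (fun ε : ℝ => ∫ y in {y : ℝ | ε < |y - x|} ∩ Set.Ioo (-1 : ℝ) 1,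
        (T ℝ ((n + 1 : ℕ) : ℤ)).eval y / Real.sqrt (1 - y ^ 2)) (𝓝[>] 0) (𝓝 0) := by
      have := tendsto_A_integral_cont hx1 hx2 (f := fun y => (T ℝ ((n + 1 : ℕ) : ℤ)).eval y)
        (Polynomial.continuous _)
      rwa [cheb_weight_integral (n + 1) (by omega)] at this
    have h4 := h2.sub (h3.const_mul 2)
    have hval : (2 * x) * (-π * (U ℝ (((n + 1 : ℕ) : ℤ) - 1)).eval x)
        - (-π * (U ℝ ((n : ℤ) - 1)).eval x) - 2 * 0
        = -π * (U ℝ (((n + 2 : ℕ) : ℤ) - 1)).eval x := by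
      have hU := U_add_two ℝ ((n : ℤ) - 1)
      have hc1 : ((n + 1 : ℕ) : ℤ) - 1 = (n : ℤ) := by push_cast; ring
      have hc2 : ((n + 2 : ℕ) : ℤ) - 1 = ((n : ℤ) - 1) + 2 := by push_cast; ring
      have hc3 : ((n : ℤ) - 1) + 1 = (n : ℤ) := by ring
      rw [hc1, hc2, hU, hc3]
      simp only [eval_sub, eval_mul, eval_ofNat, eval_X]
      ring
    rw [← hval]
    refine h4.congr' ?_
    filter_upwards [self_mem_nhdsWithin] with ε hε
    exact (hKey ε hε).symm

/-- For `n ≥ 1` and `x ∈ (−1,1)`, the principal value integral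
`p.v. ∫_{−1}^{1} T_n(y)/(√(1−y²)(x−y)) dy` equals `−π·U_{n−1}(x)`. -/
theorem chebyshev_pv_integral (n : ℕ) (hn : 1 ≤ n) (x : ℝ) (hx : x ∈ Set.Ioo (-1 : ℝ) 1) :
    Tendsto
      (fun ε : ℝ =>
        ∫ y in {y : ℝ | ε < |y - x|} ∩ Set.Ioo (-1 : ℝ) 1,
          (T ℝ (n : ℤ)).eval y / (Real.sqrt (1 - y ^ 2) * (x - y)))
      (𝓝[>] 0) (𝓝 (-π * (U ℝ ((n : ℤ) - 1)).eval x)) :=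
  cheb_pv_aux hx.1 hx.2 n
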